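/- arXiv:1405.0535 — 2 statements merged into one kernel-verified Lean document; each statement's English description precedes it below -/
import Mathlib

section
/- Let x ∈ ℝⁿ with x ≥ 0, z ∈ ℝᵐ, and K ≥ ‖f(x,z)‖_∞. Define a ∈ ℝⁿ componentwise by a_i = f_i(x,z) if x_i > 0 and a_i = max{0, f_i(x,z)} if x_i = 0. Then −a is a subgradient of the convex function y ↦ L^K(y,z) at x, that is, L^K(y,z) ≥ L^K(x,z) − aᵀ(y − x) for all y ∈ ℝⁿ. Moreover, for all w ∈ ℝᵐ, L^K(x,w) = L^K(x,z) + (w − z)ᵀ(Ax − b). -/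
open Matrix BigOperators

noncomputable def LK {n m : ℕ} (A : Matrix (Fin m) (Fin n) ℝ) (b : Fin m → ℝ)
    (c : Fin n → ℝ) (K : ℝ) (x : Fin n → ℝ) (z : Fin m → ℝ) : ℝ :=
  c ⬝ᵥ x + (1 / 2) * (x ⬝ᵥ x)
    + (1 / 2) * ((A *ᵥ x - b) ⬝ᵥ (A *ᵥ x - b))
    + z ⬝ᵥ (A *ᵥ x - b)
    + K * ∑ i, max 0 (-(x i))

noncomputable def fmap {n m : ℕ} (A : Matrix (Fin m) (Fin n) ℝ) (b : Fin m → ℝ)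
    (c : Fin n → ℝ) (x : Fin n → ℝ) (z : Fin m → ℝ) : Fin n → ℝ :=
  -(Aᵀ *ᵥ z + c + x) - Aᵀ *ᵥ (A *ᵥ x - b)

def sgm {n m : ℕ} (A : Matrix (Fin m) (Fin n) ℝ) (b : Fin m → ℝ)
    (c : Fin n → ℝ) (x : Fin n → ℝ) (z : Fin m → ℝ) : Set (Fin n) :=
  {i | 0 ≤ fmap A b c x z i ∨ 0 < x i}

open Classical in
noncomputable def ISet {ι : Type*} [Fintype ι] [DecidableEq ι] (S : Set ι) : Matrix ι ι ℝ :=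
  Matrix.diagonal fun i => if i ∈ S then 1 else 0

def IsSaddle {n m : ℕ} (A : Matrix (Fin m) (Fin n) ℝ) (b : Fin m → ℝ)
    (c : Fin n → ℝ) (K : ℝ) (xb : Fin n → ℝ) (zb : Fin m → ℝ) : Prop :=
  ∀ x z, LK A b c K xb z ≤ LK A b c K xb zb ∧ LK A b c K xb zb ≤ LK A b c K x zb

lemma LK_expand (n m : ℕ) (c : Fin n → ℝ) (b : Fin m → ℝ)
    (A : Matrix (Fin m) (Fin n) ℝ) (x y : Fin n → ℝ) (z : Fin m → ℝ) (K : ℝ) :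
    LK A b c K y z = LK A b c K x z + (-(fmap A b c x z)) ⬝ᵥ (y - x)
      + (1/2) * ((y - x) ⬝ᵥ (y - x))
      + (1/2) * ((A *ᵥ (y - x)) ⬝ᵥ (A *ᵥ (y - x)))
      + (K * ∑ i, max 0 (-(y i)) - K * ∑ i, max 0 (-(x i))) := by
  unfold LK fmap
  simp only [Matrix.mulVec_sub, neg_add, neg_sub, sub_dotProduct, dotProduct_sub,
    add_dotProduct, dotProduct_add, neg_dotProduct, dotProduct_neg]
  simp only [Matrix.mulVec_transpose, ← Matrix.dotProduct_mulVec, Matrix.mulVec_sub]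
  simp only [dotProduct_comm y x, dotProduct_comm b (A *ᵥ x), dotProduct_comm b (A *ᵥ y),
    dotProduct_comm (A *ᵥ y) (A *ᵥ x)]
  ring

/-- For x ≥ 0, z, and K ≥ ‖f(x,z)‖_∞, the vector −a (with
a_i = f_i(x,z) if x_i > 0 and a_i = max{0, f_i(x,z)} if x_i = 0) is a subgradient of
y ↦ L^K(y,z) at x; moreover L^K(x,·) is affine: L^K(x,w) = L^K(x,z) + (w−z)ᵀ(Ax−b). -/
theorem generalized_gradient_element (n m : ℕ) (c : Fin n → ℝ) (b : Fin m → ℝ)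
    (A : Matrix (Fin m) (Fin n) ℝ) (x : Fin n → ℝ) (z : Fin m → ℝ) (K : ℝ)
    (hx : ∀ i, 0 ≤ x i)
    (hK : ‖fmap A b c x z‖ ≤ K)
    (a : Fin n → ℝ)
    (ha : ∀ i, (0 < x i → a i = fmap A b c x z i) ∧
               (x i = 0 → a i = max 0 (fmap A b c x z i))) :
    (∀ y : Fin n → ℝ, LK A b c K x z - a ⬝ᵥ (y - x) ≤ LK A b c K y z) ∧
    (∀ w : Fin m → ℝ, LK A b c K x w = LK A b c K x z + (w - z) ⬝ᵥ (A *ᵥ x - b)) := by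
  have hK0 : 0 ≤ K := le_trans (norm_nonneg _) hK
  have hfi : ∀ i, |fmap A b c x z i| ≤ K := fun i =>
    le_trans (by simpa using norm_le_pi_norm (fmap A b c x z) i) hK
  constructor
  · intro y
    have hexp := LK_expand n m c b A x y z K
    have hSx : ∑ i, max 0 (-(x i)) = 0 :=
      Finset.sum_eq_zero fun i _ => max_eq_left (neg_nonpos.mpr (hx i))
    rw [hSx, mul_zero, sub_zero] at hexp
    have hQ1 : 0 ≤ (y - x) ⬝ᵥ (y - x) :=
      Finset.sum_nonneg fun i _ => mul_self_nonneg _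
    have hQ2 : 0 ≤ (A *ᵥ (y - x)) ⬝ᵥ (A *ᵥ (y - x)) :=
      Finset.sum_nonneg fun i _ => mul_self_nonneg _
    have hcomb : (-(fmap A b c x z)) ⬝ᵥ (y - x) + a ⬝ᵥ (y - x) + K * ∑ i, max 0 (-(y i))
        = ∑ i, ((a i - fmap A b c x z i) * (y i - x i) + K * max 0 (-(y i))) := by
      simp only [dotProduct, Finset.mul_sum, Pi.neg_apply, Pi.sub_apply,
        ← Finset.sum_add_distrib]
      exact Finset.sum_congr rfl fun i _ => by ring
    have hsum : 0 ≤ ∑ i, ((a i - fmap A b c x z i) * (y i - x i) + K * max 0 (-(y i))) := by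
      refine Finset.sum_nonneg fun i _ => ?_
      have hm1 : (0:ℝ) ≤ max 0 (-(y i)) := le_max_left _ _
      rcases (hx i).lt_or_eq with hpos | h0
      · rw [(ha i).1 hpos]
        simp only [sub_self, zero_mul, zero_add]
        positivity
      · have hxi : x i = 0 := h0.symm
        rw [(ha i).2 hxi, hxi, sub_zero]
        set fi := fmap A b c x z i with hfidef
        have hd0 : (0:ℝ) ≤ max 0 fi - fi := sub_nonneg.mpr (le_max_right _ _)
        have hdK : max 0 fi - fi ≤ K := by
          have h := abs_le.mp (hfi i)
          have h2 : max 0 fi ≤ K + fi := max_le (by linarith [h.1]) (by linarith)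
          linarith
        have hm2 : -(y i) ≤ max 0 (-(y i)) := le_max_right _ _
        have p1 : 0 ≤ (K - (max 0 fi - fi)) * max 0 (-(y i)) :=
          mul_nonneg (by linarith) hm1
        have p2 : 0 ≤ (max 0 fi - fi) * (max 0 (-(y i)) + y i) :=
          mul_nonneg hd0 (by linarith)
        nlinarith [p1, p2]
    linarith
  · intro w
    simp only [LK, sub_dotProduct]
    ring
end

section
/- Assume ρ(AᵀA) ≤ 1, x̂ ∈ ℝⁿ with x̂ ≥ 0, ẑ ∈ ℝᵐ, K ≥ ‖f(x̂,ẑ)‖_∞, and (x̄,z̄) is a saddle point of L^K with Ax̄ = b and x̄ ≥ 0. Let x ∈ ℝⁿ, z ∈ ℝᵐ and suppose σ(x,z) = σ(x̂,ẑ) =: p̂ and, with e_x = x − x̂ and e_z = z − ẑ, that 40 e_xᵀe_x + 20 e_zᵀe_z ≤ ¼ f(x̂,ẑ)ᵀ I_{p̂} f(x̂,ẑ) + ⅛ (Ax̂ − b)ᵀ(Ax̂ − b). Then (x − x̄)ᵀ I_{p̂} f(x̂,ẑ) + (z − z̄)ᵀ(Ax̂ − b) − f(x,z)ᵀ I_{p̂}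 (AᵀA + I) I_{p̂} f(x̂,ẑ) − f(x,z)ᵀ I_{p̂} Aᵀ(Ax̂ − b) + (Ax − b)ᵀ A I_{p̂} f(x̂,ẑ) ≤ −¼ f(x̂,ẑ)ᵀ I_{p̂} f(x̂,ẑ) − ⅛ (Ax̂ − b)ᵀ(Ax̂ − b) ≤ 0. -/
open Matrix BigOperators

open scoped ENNReal NNReal


section helpers
variable {n m : ℕ}

lemma dot_self_nonneg' (v : Fin n → ℝ) : 0 ≤ v ⬝ᵥ v :=
  Finset.sum_nonneg fun i _ => mul_self_nonneg _

lemma cauchy_dot (u v : Fin n → ℝ) : (u ⬝ᵥ v)^2 ≤ (u ⬝ᵥ u) * (v ⬝ᵥ v) := by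
  have := Finset.sum_mul_sq_le_sq_mul_sq Finset.univ u v
  simpa [dotProduct, sq] using this

lemma amgm {T X Y p q : ℝ} (hp : 0 < p) (hq : 0 < q) (hpq : 1 ≤ p*q)
    (hX : 0 ≤ X) (hY : 0 ≤ Y) (h : T^2 ≤ X*Y) :
    T ≤ (p*X + q*Y)/2 := by
  rcases le_or_gt T 0 with hT | hT
  · have : 0 ≤ (p*X + q*Y)/2 := by positivity
    linarith
  · have hs : 0 ≤ p*X + q*Y := by positivity
    have h2 : (2*T)^2 ≤ (p*X + q*Y)^2 := by nlinarith [sq_nonneg (p*X - q*Y), mul_nonneg hX hY]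
    nlinarith [h2, hs, hT]


lemma two_sq (s t : Fin n → ℝ) : (s + t) ⬝ᵥ (s + t) ≤ 2*(s ⬝ᵥ s + t ⬝ᵥ t) := by
  simp only [dotProduct, Pi.add_apply, ← Finset.sum_add_distrib, Finset.mul_sum]
  apply Finset.sum_le_sum
  intro i _
  nlinarith [sq_nonneg (s i - t i)]

lemma three_sq (s t u : Fin n → ℝ) :
    (s + t + u) ⬝ᵥ (s + t + u) ≤ 3*(s ⬝ᵥ s + t ⬝ᵥ t + u ⬝ᵥ u) := by
  simp only [dotProduct, Pi.add_apply, ← Finset.sum_add_distrib, Finset.mul_sum]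
  apply Finset.sum_le_sum
  intro i _
  nlinarith [sq_nonneg (s i - t i), sq_nonneg (s i - u i), sq_nonneg (t i - u i)]

end helpers

section isets
variable {n : ℕ} (S : Set (Fin n))

lemma ISet_apply_mem {v : Fin n → ℝ} {i : Fin n} (h : i ∈ S) : (ISet S *ᵥ v) i = v i := by
  simp [ISet, mulVec_diagonal, h]

lemma ISet_apply_not_mem {v : Fin n → ℝ} {i : Fin n} (h : i ∉ S) : (ISet S *ᵥ v) i = 0 := by
  simp [ISet, mulVec_diagonal, h]

lemma dot_ISet (u v : Fin n → ℝ) : u ⬝ᵥ (ISet S *ᵥ v) = (ISet S *ᵥ u) ⬝ᵥ v := by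
  unfold dotProduct
  apply Finset.sum_congr rfl
  intro i _
  by_cases h : i ∈ S
  · rw [ISet_apply_mem S h, ISet_apply_mem S h]
  · rw [ISet_apply_not_mem S h, ISet_apply_not_mem S h]; ring

lemma ISet_dot_self (v : Fin n → ℝ) :
    v ⬝ᵥ (ISet S *ᵥ v) = (ISet S *ᵥ v) ⬝ᵥ (ISet S *ᵥ v) := by
  unfold dotProduct
  apply Finset.sum_congr rfl
  intro i _
  by_cases h : i ∈ S
  · rw [ISet_apply_mem S h]
  · rw [ISet_apply_not_mem S h]; ring

lemma ISet_contraction (v : Fin n → ℝ) :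
    (ISet S *ᵥ v) ⬝ᵥ (ISet S *ᵥ v) ≤ v ⬝ᵥ v := by
  unfold dotProduct
  apply Finset.sum_le_sum
  intro i _
  by_cases h : i ∈ S
  · rw [ISet_apply_mem S h]
  · rw [ISet_apply_not_mem S h]
    simpa using mul_self_nonneg (v i)

end isets


lemma dot_transpose {n m : ℕ} (A : Matrix (Fin m) (Fin n) ℝ) (u : Fin m → ℝ) (v : Fin n → ℝ) :
    (Aᵀ *ᵥ u) ⬝ᵥ v = u ⬝ᵥ (A *ᵥ v) := by
  rw [dotProduct_mulVec u A v, mulVec_transpose]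

lemma opA {n m : ℕ} (A : Matrix (Fin m) (Fin n) ℝ)
    (hρ : spectralRadius ℝ (Aᵀ * A) ≤ 1) (v : Fin n → ℝ) :
    (A *ᵥ v) ⬝ᵥ (A *ᵥ v) ≤ v ⬝ᵥ v := by
  have hB : (Aᵀ * A).IsHermitian := by simpa using isHermitian_conjTranspose_mul_self A
  have heig : ∀ i, hB.eigenvalues i ≤ 1 := by
    intro i
    have hmem := hB.eigenvalues_mem_spectrum_real i
    have h1 : (‖hB.eigenvalues i‖₊ : ℝ≥0∞) ≤ spectralRadius ℝ (Aᵀ * A) :=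
      le_iSup₂ (f := fun k (_ : k ∈ spectrum ℝ (Aᵀ * A)) => (‖k‖₊ : ℝ≥0∞)) _ hmem
    have h2 : (‖hB.eigenvalues i‖₊ : ℝ≥0∞) ≤ 1 := h1.trans hρ
    rw [← ENNReal.coe_one, ENNReal.coe_le_coe] at h2
    have h3 : ‖hB.eigenvalues i‖ ≤ 1 := h2
    calc hB.eigenvalues i ≤ |hB.eigenvalues i| := le_abs_self _
      _ ≤ 1 := by rwa [← Real.norm_eq_abs]
  have hpsd : PosSemidef (1 - Aᵀ * A) := by
    set U : Matrix (Fin n) (Fin n) ℝ := (hB.eigenvectorUnitary : Matrix (Fin n) (Fin n) ℝ) with hUdef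
    have hU : U * star U = 1 := (Matrix.mem_unitaryGroup_iff).mp hB.eigenvectorUnitary.2
    have hsp : Aᵀ * A = U * Matrix.diagonal hB.eigenvalues * star U := by
      simpa [Function.comp, hUdef] using hB.spectral_theorem
    have hdiag : PosSemidef (Matrix.diagonal (fun i => 1 - hB.eigenvalues i)) := by
      rw [posSemidef_diagonal_iff]
      intro i
      linarith [heig i]
    have hd : Matrix.diagonal (fun i : Fin n => 1 - hB.eigenvalues i)
        = 1 - Matrix.diagonal hB.eigenvalues := by
      rw [← Matrix.diagonal_one, ← Matrix.diagonal_sub]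
    have key : 1 - Aᵀ * A = U * Matrix.diagonal (fun i => 1 - hB.eigenvalues i) * star U := by
      rw [hd, Matrix.mul_sub, Matrix.sub_mul, Matrix.mul_one, hU, ← hsp]
    rw [key]
    exact hdiag.mul_mul_conjTranspose_same U
  have h0 := hpsd.dotProduct_mulVec_nonneg v
  have hstar : star v = v := rfl
  rw [hstar, sub_mulVec, one_mulVec, dotProduct_sub, ← Matrix.mulVec_mulVec,
    dotProduct_comm v (Aᵀ *ᵥ (A *ᵥ v)), dot_transpose] at h0
  linarith

lemma opAT {n m : ℕ} (A : Matrix (Fin m) (Fin n) ℝ)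
    (hρ : spectralRadius ℝ (Aᵀ * A) ≤ 1) (v : Fin m → ℝ) :
    (Aᵀ *ᵥ v) ⬝ᵥ (Aᵀ *ᵥ v) ≤ v ⬝ᵥ v := by
  set s := Aᵀ *ᵥ v with hs
  have h1 : s ⬝ᵥ s = v ⬝ᵥ (A *ᵥ s) := by rw [hs, dot_transpose]
  have h2 : (v ⬝ᵥ (A *ᵥ s))^2 ≤ (v ⬝ᵥ v) * ((A *ᵥ s) ⬝ᵥ (A *ᵥ s)) := by
    have := Finset.sum_mul_sq_le_sq_mul_sq Finset.univ v (A *ᵥ s)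
    simpa [dotProduct, sq] using this
  have h3 : (A *ᵥ s) ⬝ᵥ (A *ᵥ s) ≤ s ⬝ᵥ s := opA A hρ s
  have h4 : 0 ≤ s ⬝ᵥ s := Finset.sum_nonneg fun i _ => mul_self_nonneg _
  have h5 : 0 ≤ v ⬝ᵥ v := Finset.sum_nonneg fun i _ => mul_self_nonneg _
  nlinarith [h1, h2, h3, h4, h5]

section saddle
variable {n m : ℕ} (A : Matrix (Fin m) (Fin n) ℝ) (b : Fin m → ℝ) (c : Fin n → ℝ) (K : ℝ)
  (xb : Fin n → ℝ) (zb : Fin m → ℝ)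

lemma quad_nonneg {γ C : ℝ} (hC : 0 < C) (h : ∀ t : ℝ, 0 < t → 0 ≤ t*γ + t^2*C) : 0 ≤ γ := by
  by_contra hg
  push_neg at hg
  set t := -γ / (2*C) with htdef
  have ht : 0 < t := div_pos (by linarith) (by linarith)
  have h1 := h t ht
  have htC : t * C = -γ / 2 := by rw [htdef]; field_simp
  have h2 : t^2 * C = -(t*γ)/2 := by rw [sq, mul_assoc, htC, htdef]; ring
  have h3 : t * γ < 0 := mul_neg_of_pos_of_neg ht hg
  linarith

lemma quad_nonpos {γ C xbi : ℝ} (hC : 0 < C) (hx : 0 < xbi)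
    (h : ∀ t : ℝ, 0 ≤ xbi + t → 0 ≤ t*γ + t^2*C) : γ ≤ 0 := by
  by_contra hg
  push_neg at hg
  set s := min (xbi / 2) (γ / (2*C)) with hsdef
  have hs : 0 < s := lt_min (by linarith) (by positivity)
  have ht1 : 0 ≤ xbi + (-s) := by
    have : s ≤ xbi / 2 := min_le_left _ _
    linarith
  have hq := h (-s) ht1
  have hsC : s * C ≤ γ / 2 := by
    calc s * C ≤ (γ / (2*C)) * C := by
          exact mul_le_mul_of_nonneg_right (min_le_right _ _) (le_of_lt hC)
      _ = γ / 2 := by field_simp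
  have h2 : s^2 * C ≤ s * (γ/2) := by
    rw [sq, mul_assoc]
    exact mul_le_mul_of_nonneg_left hsC (le_of_lt hs)
  have h3 : 0 < s * γ := mul_pos hs hg
  have h4 : (-s)^2 * C = s^2 * C := by ring
  have h5 : (-s) * γ = -(s * γ) := by ring
  nlinarith [hq, h2, h3, h4, h5]

lemma LK_diff (hAxb : A *ᵥ xb = b) (i : Fin n) (t : ℝ) (ht : 0 ≤ xb i + t) (hxbi : 0 ≤ xb i) :
    LK A b c K (xb + t • (Pi.single i 1 : Fin n → ℝ)) zb
      = LK A b c K xb zb + t * (c i + xb i + zb ⬝ᵥ (A *ᵥ (Pi.single i 1 : Fin n → ℝ)))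
        + t^2 * ((1 + (A *ᵥ (Pi.single i 1 : Fin n → ℝ)) ⬝ᵥ (A *ᵥ (Pi.single i 1 : Fin n → ℝ))) / 2) := by
  set ei : Fin n → ℝ := Pi.single i 1 with hei
  have hres : A *ᵥ (xb + t • ei) - b = t • (A *ᵥ ei) := by
    rw [mulVec_add, mulVec_smul, hAxb]
    abel
  have hpen : ∑ j, max 0 (-((xb + t • ei) j)) = ∑ j, max 0 (-(xb j)) := by
    apply Finset.sum_congr rfl
    intro j _
    by_cases h : j = i
    · subst h
      simp only [hei, Pi.add_apply, Pi.smul_apply, Pi.single_eq_same, smul_eq_mul, mul_one]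
      rw [max_eq_left (by linarith), max_eq_left (by linarith)]
    · simp [hei, Pi.single_eq_of_ne h]
  unfold LK
  rw [hres, hpen, hAxb]
  simp only [dotProduct_add, add_dotProduct, dotProduct_smul, smul_dotProduct, smul_eq_mul,
    sub_self, dotProduct_zero, zero_dotProduct]
  have h1 : c ⬝ᵥ ei = c i := by simp [hei, dotProduct_single]
  have h2 : xb ⬝ᵥ ei = xb i := by simp [hei, dotProduct_single]
  have h3 : ei ⬝ᵥ xb = xb i := by simp [hei, single_dotProduct]
  have h4 : ei ⬝ᵥ ei = 1 := by simp [hei, single_dotProduct, Pi.single_eq_same]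
  rw [h1, h2, h3, h4]
  ring

lemma saddle_facts (hsaddle : IsSaddle A b c K xb zb) (hAxb : A *ᵥ xb = b)
    (hxb : ∀ i, 0 ≤ xb i) :
    ∀ i, fmap A b c xb zb i ≤ 0 ∧ xb i * fmap A b c xb zb i = 0 := by
  intro i
  set ei : Fin n → ℝ := Pi.single i 1 with hei
  set γ := c i + xb i + zb ⬝ᵥ (A *ᵥ ei) with hγ
  set C := (1 + (A *ᵥ ei) ⬝ᵥ (A *ᵥ ei)) / 2 with hC
  have hCpos : 0 < C := by
    have : 0 ≤ (A *ᵥ ei) ⬝ᵥ (A *ᵥ ei) :=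
      Finset.sum_nonneg fun j _ => mul_self_nonneg _
    rw [hC]; linarith
  have hquad : ∀ t : ℝ, 0 ≤ xb i + t → 0 ≤ t * γ + t^2 * C := by
    intro t ht
    have hd := (hsaddle (xb + t • ei) zb).2
    rw [hei] at hd
    rw [LK_diff A b c K xb zb hAxb i t ht (hxb i)] at hd
    rw [← hei, ← hγ, ← hC] at hd
    linarith
  have hfmap : fmap A b c xb zb i = -γ := by
    unfold fmap
    rw [hAxb]
    simp only [sub_self, mulVec_zero, Pi.sub_apply, Pi.neg_apply, Pi.add_apply, Pi.zero_apply,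
      sub_zero]
    have e1 : zb ⬝ᵥ (A *ᵥ ei) = ∑ j, zb j * A j i := by
      simp [hei, mulVec_single, dotProduct]
    have e2 : (Aᵀ *ᵥ zb) i = ∑ j, zb j * A j i := by
      simp only [mulVec, dotProduct, transpose_apply]
      exact Finset.sum_congr rfl fun j _ => mul_comm _ _
    rw [e2, hγ, e1]
    ring
  have hγ0 : 0 ≤ γ := by
    apply quad_nonneg hCpos
    intro t ht
    exact hquad t (by linarith [hxb i])
  refine ⟨by rw [hfmap]; linarith, ?_⟩
  rcases eq_or_lt_of_le (hxb i) with h | h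
  · rw [← h]; ring
  · have hγ0' : γ ≤ 0 := quad_nonpos hCpos h hquad
    have hz : γ = 0 := le_antisymm hγ0' hγ0
    rw [hfmap, hz]
    ring

end saddle


/-- When the modes agree (σ(x,z) = σ(x̂,ẑ) = p̂) and the trigger inequality
40 e_xᵀe_x + 20 e_zᵀe_z ≤ ¼ f̂ᵀI_{p̂}f̂ + ⅛ r̂ᵀr̂ holds, the Lie derivative of the Lyapunov
function is bounded by −¼ f̂ᵀI_{p̂}f̂ − ⅛ r̂ᵀr̂ ≤ 0. -/
theorem lie_derivative_V_decrease (n m : ℕ) (c : Fin n → ℝ) (b : Fin m → ℝ)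
    (A : Matrix (Fin m) (Fin n) ℝ)
    (hρ : spectralRadius ℝ (Aᵀ * A) ≤ 1)
    (xh : Fin n → ℝ) (zh : Fin m → ℝ) (K : ℝ)
    (hxh : ∀ i, 0 ≤ xh i)
    (hK : ‖fmap A b c xh zh‖ ≤ K)
    (xb : Fin n → ℝ) (zb : Fin m → ℝ)
    (hsaddle : IsSaddle A b c K xb zb)
    (hAxb : A *ᵥ xb = b) (hxb : ∀ i, 0 ≤ xb i)
    (x : Fin n → ℝ) (z : Fin m → ℝ)
    (hmode : sgm A b c x z = sgm A b c xh zh)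
    (htrig : 40 * ((x - xh) ⬝ᵥ (x - xh)) + 20 * ((z - zh) ⬝ᵥ (z - zh))
      ≤ (1 / 4) * (fmap A b c xh zh ⬝ᵥ (ISet (sgm A b c xh zh) *ᵥ fmap A b c xh zh))
        + (1 / 8) * ((A *ᵥ xh - b) ⬝ᵥ (A *ᵥ xh - b))) :
    ((x - xb) ⬝ᵥ (ISet (sgm A b c xh zh) *ᵥ fmap A b c xh zh)
      + (z - zb) ⬝ᵥ (A *ᵥ xh - b)
      - fmap A b c x z ⬝ᵥ (ISet (sgm A b c xh zh) *ᵥ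
          ((Aᵀ * A + 1) *ᵥ (ISet (sgm A b c xh zh) *ᵥ fmap A b c xh zh)))
      - fmap A b c x z ⬝ᵥ (ISet (sgm A b c xh zh) *ᵥ (Aᵀ *ᵥ (A *ᵥ xh - b)))
      + (A *ᵥ x - b) ⬝ᵥ (A *ᵥ (ISet (sgm A b c xh zh) *ᵥ fmap A b c xh zh))
    ≤ -(1 / 4) * (fmap A b c xh zh ⬝ᵥ (ISet (sgm A b c xh zh) *ᵥ fmap A b c xh zh))
      - (1 / 8) * ((A *ᵥ xh - b) ⬝ᵥ (A *ᵥ xh - b)))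
    ∧
    (-(1 / 4) * (fmap A b c xh zh ⬝ᵥ (ISet (sgm A b c xh zh) *ᵥ fmap A b c xh zh))
      - (1 / 8) * ((A *ᵥ xh - b) ⬝ᵥ (A *ᵥ xh - b)) ≤ 0) := by
  have hsf := saddle_facts A b c K xb zb hsaddle hAxb hxb
  set S : Set (Fin n) := sgm A b c xh zh with hS
  set fh : Fin n → ℝ := fmap A b c xh zh with hfh
  set fx : Fin n → ℝ := fmap A b c x z with hfx
  set fb : Fin n → ℝ := fmap A b c xb zb with hfb
  set w : Fin n → ℝ := ISet S *ᵥ fh with hw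
  set r : Fin m → ℝ := A *ᵥ xh - b with hr
  set ex : Fin n → ℝ := x - xh with hex
  set ez : Fin m → ℝ := z - zh with hez
  set e : Fin n → ℝ := xh - xb with he
  set d : Fin m → ℝ := zh - zb with hd
  set G : Fin n → ℝ := ex + Aᵀ *ᵥ (A *ᵥ ex) + Aᵀ *ᵥ ez with hG
  have ha2eq : fh ⬝ᵥ w = w ⬝ᵥ w := by rw [hw]; exact ISet_dot_self S fh
  have hwnn : 0 ≤ w ⬝ᵥ w := dot_self_nonneg' w
  have hrnn : 0 ≤ r ⬝ᵥ r := dot_self_nonneg' r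
  have hexnn : 0 ≤ ex ⬝ᵥ ex := dot_self_nonneg' ex
  have heznn : 0 ≤ ez ⬝ᵥ ez := dot_self_nonneg' ez
  have hAw : (A *ᵥ w) ⬝ᵥ (A *ᵥ w) ≤ w ⬝ᵥ w := opA A hρ w
  have hAex : (A *ᵥ ex) ⬝ᵥ (A *ᵥ ex) ≤ ex ⬝ᵥ ex := opA A hρ ex
  have hAwnn : 0 ≤ (A *ᵥ w) ⬝ᵥ (A *ᵥ w) := dot_self_nonneg' _
  have hAexnn : 0 ≤ (A *ᵥ ex) ⬝ᵥ (A *ᵥ ex) := dot_self_nonneg' _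
  -- vector identities
  have hrAe : r = A *ᵥ e := by rw [hr, he, mulVec_sub, hAxb]
  have hsplit1 : x - xb = ex + e := by rw [hex, he]; abel
  have hsplit2 : z - zb = ez + d := by rw [hez, hd]; abel
  have hsplit3 : fx = fh - G := by
    rw [hfx, hfh, hG, hex, hez]
    simp only [fmap, mulVec_sub, mulVec_add]
    abel
  have hsplit5 : A *ᵥ x - b = r + A *ᵥ ex := by rw [hr, hex, mulVec_sub]; abel
  have hfheq : fh = fb - e - Aᵀ *ᵥ d - Aᵀ *ᵥ (A *ᵥ e) := by
    rw [hfh, hfb, he, hd]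
    simp only [fmap, hAxb, mulVec_sub, mulVec_add, sub_self, mulVec_zero]
    abel
  -- membership characterization
  have hmem : ∀ j, j ∈ S ↔ (0 ≤ fh j ∨ 0 < xh j) := by
    intro j
    rw [hS, hfh]
    exact Iff.rfl
  -- base inequality pieces
  have hBw : e ⬝ᵥ w ≤ e ⬝ᵥ fh := by
    simp only [dotProduct]
    apply Finset.sum_le_sum
    intro i _
    by_cases hi : i ∈ S
    · rw [hw, ISet_apply_mem S hi]
    · rw [hw, ISet_apply_not_mem S hi]
      have hnot : ¬(0 ≤ fh i ∨ 0 < xh i) := fun hcon => hi ((hmem i).mpr hcon)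
      push_neg at hnot
      have hxh0 : xh i = 0 := le_antisymm hnot.2 (hxh i)
      have hei : e i = -(xb i) := by rw [he]; simp [hxh0]
      nlinarith [hnot.1, hxb i, hei]
  have hBfb : e ⬝ᵥ fb ≤ 0 := by
    apply Finset.sum_nonpos
    intro i _
    have h1 := (hsf i).1
    have h2 := (hsf i).2
    have hei : e i = xh i - xb i := by rw [he]; rfl
    rw [hei]
    nlinarith [mul_nonneg (hxh i) (neg_nonneg.mpr h1), h2]
  have hBid : e ⬝ᵥ fh + d ⬝ᵥ r = e ⬝ᵥ fb - e ⬝ᵥ e - r ⬝ᵥ r := by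
    have h1 : e ⬝ᵥ fh = e ⬝ᵥ fb - e ⬝ᵥ e - e ⬝ᵥ (Aᵀ *ᵥ d) - e ⬝ᵥ (Aᵀ *ᵥ (A *ᵥ e)) := by
      rw [hfheq]
      simp only [dotProduct_sub]
    have h2 : e ⬝ᵥ (Aᵀ *ᵥ d) = d ⬝ᵥ r := by
      calc e ⬝ᵥ (Aᵀ *ᵥ d) = (Aᵀ *ᵥ d) ⬝ᵥ e := dotProduct_comm _ _
        _ = d ⬝ᵥ (A *ᵥ e) := dot_transpose A d e
        _ = d ⬝ᵥ r := by rw [← hrAe]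
    have h3 : e ⬝ᵥ (Aᵀ *ᵥ (A *ᵥ e)) = r ⬝ᵥ r := by
      calc e ⬝ᵥ (Aᵀ *ᵥ (A *ᵥ e)) = (Aᵀ *ᵥ (A *ᵥ e)) ⬝ᵥ e := dotProduct_comm _ _
        _ = (A *ᵥ e) ⬝ᵥ (A *ᵥ e) := dot_transpose A (A *ᵥ e) e
        _ = r ⬝ᵥ r := by rw [hrAe]
    rw [h1, h2, h3]
    ring
  have hee : 0 ≤ e ⬝ᵥ e := dot_self_nonneg' e
  have hB3 : e ⬝ᵥ w + d ⬝ᵥ r ≤ -(r ⬝ᵥ r) := by linarith [hBw, hBfb, hBid, hee]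
  -- base equalities
  have hB1 : fh ⬝ᵥ (ISet S *ᵥ (Aᵀ *ᵥ r)) = r ⬝ᵥ (A *ᵥ w) := by
    rw [dot_ISet S fh (Aᵀ *ᵥ r), ← hw]
    calc w ⬝ᵥ (Aᵀ *ᵥ r) = (Aᵀ *ᵥ r) ⬝ᵥ w := dotProduct_comm _ _
      _ = r ⬝ᵥ (A *ᵥ w) := dot_transpose A r w
  have hsum1 : (Aᵀ * A + 1) *ᵥ w = Aᵀ *ᵥ (A *ᵥ w) + w := by
    rw [add_mulVec, one_mulVec, ← mulVec_mulVec]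
  have hB2 : fh ⬝ᵥ (ISet S *ᵥ ((Aᵀ * A + 1) *ᵥ w)) = (A *ᵥ w) ⬝ᵥ (A *ᵥ w) + w ⬝ᵥ w := by
    rw [dot_ISet S fh ((Aᵀ * A + 1) *ᵥ w), ← hw, hsum1, dotProduct_add]
    have h4 : w ⬝ᵥ (Aᵀ *ᵥ (A *ᵥ w)) = (A *ᵥ w) ⬝ᵥ (A *ᵥ w) := by
      calc w ⬝ᵥ (Aᵀ *ᵥ (A *ᵥ w)) = (Aᵀ *ᵥ (A *ᵥ w)) ⬝ᵥ w := dotProduct_comm _ _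
        _ = (A *ᵥ w) ⬝ᵥ (A *ᵥ w) := dot_transpose A (A *ᵥ w) w
    rw [h4]
  -- Delta bounds
  have hGG : G ⬝ᵥ G ≤ 3*(ex ⬝ᵥ ex + ex ⬝ᵥ ex + ez ⬝ᵥ ez) := by
    have h1 := three_sq ex (Aᵀ *ᵥ (A *ᵥ ex)) (Aᵀ *ᵥ ez)
    have h2 : (Aᵀ *ᵥ (A *ᵥ ex)) ⬝ᵥ (Aᵀ *ᵥ (A *ᵥ ex)) ≤ ex ⬝ᵥ ex :=
      le_trans (opAT A hρ (A *ᵥ ex)) hAex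
    have h3 : (Aᵀ *ᵥ ez) ⬝ᵥ (Aᵀ *ᵥ ez) ≤ ez ⬝ᵥ ez := opAT A hρ ez
    rw [hG]
    linarith [h1, h2, h3]
  have hGnn : 0 ≤ G ⬝ᵥ G := dot_self_nonneg' G
  have hXnn : 0 ≤ 3*(ex ⬝ᵥ ex + ex ⬝ᵥ ex + ez ⬝ᵥ ez) := by linarith
  have hQ1 : (ISet S *ᵥ ((Aᵀ * A + 1) *ᵥ w)) ⬝ᵥ (ISet S *ᵥ ((Aᵀ * A + 1) *ᵥ w)) ≤ 4*(w ⬝ᵥ w) := by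
    have hc := ISet_contraction S ((Aᵀ * A + 1) *ᵥ w)
    have h2 := two_sq (Aᵀ *ᵥ (A *ᵥ w)) w
    have h3 : (Aᵀ *ᵥ (A *ᵥ w)) ⬝ᵥ (Aᵀ *ᵥ (A *ᵥ w)) ≤ w ⬝ᵥ w :=
      le_trans (opAT A hρ (A *ᵥ w)) hAw
    refine le_trans hc ?_
    rw [hsum1]
    linarith [h2, h3]
  have hQ1nn : 0 ≤ (ISet S *ᵥ ((Aᵀ * A + 1) *ᵥ w)) ⬝ᵥ (ISet S *ᵥ ((Aᵀ * A + 1) *ᵥ w)) :=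
    dot_self_nonneg' _
  have hQ2 : (ISet S *ᵥ (Aᵀ *ᵥ r)) ⬝ᵥ (ISet S *ᵥ (Aᵀ *ᵥ r)) ≤ r ⬝ᵥ r := by
    have hc := ISet_contraction S (Aᵀ *ᵥ r)
    have h3 : (Aᵀ *ᵥ r) ⬝ᵥ (Aᵀ *ᵥ r) ≤ r ⬝ᵥ r := opAT A hρ r
    linarith
  have hQ2nn : 0 ≤ (ISet S *ᵥ (Aᵀ *ᵥ r)) ⬝ᵥ (ISet S *ᵥ (Aᵀ *ᵥ r)) := dot_self_nonneg' _
  have hD1 : ex ⬝ᵥ w ≤ (16*(ex ⬝ᵥ ex) + (1/16)*(w ⬝ᵥ w))/2 := by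
    apply amgm (by norm_num) (by norm_num) (by norm_num) hexnn hwnn
    exact cauchy_dot ex w
  have hD2 : ez ⬝ᵥ r ≤ (2*(ez ⬝ᵥ ez) + (1/2)*(r ⬝ᵥ r))/2 := by
    apply amgm (by norm_num) (by norm_num) (by norm_num) heznn hrnn
    exact cauchy_dot ez r
  have hD3 : G ⬝ᵥ (ISet S *ᵥ ((Aᵀ * A + 1) *ᵥ w))
      ≤ (5*(3*(ex ⬝ᵥ ex + ex ⬝ᵥ ex + ez ⬝ᵥ ez)) + (1/5)*(4*(w ⬝ᵥ w)))/2 := by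
    apply amgm (by norm_num) (by norm_num) (by norm_num) hXnn (by linarith)
    calc (G ⬝ᵥ (ISet S *ᵥ ((Aᵀ * A + 1) *ᵥ w)))^2
        ≤ (G ⬝ᵥ G) * ((ISet S *ᵥ ((Aᵀ * A + 1) *ᵥ w)) ⬝ᵥ (ISet S *ᵥ ((Aᵀ * A + 1) *ᵥ w))) :=
          cauchy_dot _ _
      _ ≤ 3*(ex ⬝ᵥ ex + ex ⬝ᵥ ex + ez ⬝ᵥ ez) * (4*(w ⬝ᵥ w)) :=
          mul_le_mul hGG hQ1 hQ1nn hXnn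
  have hD4 : G ⬝ᵥ (ISet S *ᵥ (Aᵀ *ᵥ r))
      ≤ (3*(3*(ex ⬝ᵥ ex + ex ⬝ᵥ ex + ez ⬝ᵥ ez)) + (1/3)*(r ⬝ᵥ r))/2 := by
    apply amgm (by norm_num) (by norm_num) (by norm_num) hXnn hrnn
    calc (G ⬝ᵥ (ISet S *ᵥ (Aᵀ *ᵥ r)))^2
        ≤ (G ⬝ᵥ G) * ((ISet S *ᵥ (Aᵀ *ᵥ r)) ⬝ᵥ (ISet S *ᵥ (Aᵀ *ᵥ r))) := cauchy_dot _ _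
      _ ≤ 3*(ex ⬝ᵥ ex + ex ⬝ᵥ ex + ez ⬝ᵥ ez) * (r ⬝ᵥ r) := mul_le_mul hGG hQ2 hQ2nn hXnn
  have hD5 : (A *ᵥ ex) ⬝ᵥ (A *ᵥ w) ≤ (16*(ex ⬝ᵥ ex) + (1/16)*(w ⬝ᵥ w))/2 := by
    apply amgm (by norm_num) (by norm_num) (by norm_num) hexnn hwnn
    calc ((A *ᵥ ex) ⬝ᵥ (A *ᵥ w))^2
        ≤ ((A *ᵥ ex) ⬝ᵥ (A *ᵥ ex)) * ((A *ᵥ w) ⬝ᵥ (A *ᵥ w)) := cauchy_dot _ _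
      _ ≤ (ex ⬝ᵥ ex) * (w ⬝ᵥ w) := mul_le_mul hAex hAw hAwnn hexnn
  constructor
  · rw [hsplit1, hsplit2, hsplit3, hsplit5]
    simp only [add_dotProduct, sub_dotProduct]
    rw [hB1, hB2]
    linarith [hD1, hD2, hD3, hD4, hD5, hB3, htrig, ha2eq, hAwnn, heznn, hwnn, hrnn]
  · linarith [hwnn, ha2eq, hrnn]
end
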